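/- Fix integers n_u ≥ 1, n_c ≥ 1 and constants ḡ > δ̄ ≥ 0, and set λ = (ḡ+δ̄)/(ḡ−δ̄). Let α : ℝ → ℝ be continuous, strictly increasing, with α(0) = 0, and suppose α(s) + λ·α(−s) ≤ 0 for every s ≤ 0. For each j ∈ {1,…,n_c} let ᾱ_j : ℝ → ℝ be a continuous strictly increasing bijection with ᾱ_j(0) = 0, let a_j ∈ ℝ^{n_u} be a unit vector, and let r_j, d_j ∈ ℝ satisfy r_j ≤ ᾱ_j(d_j). Assume d_j + d_k ≤ 0 whenever j ≠ k. Then the set F = { u ∈ ℝ^{n_u} : ⟨a_j, u⟩ + (δ̄/ḡ)·‖u‖ ≤ −α(ᾱ_j⁻¹(r_j)) for all j = 1,…,n_c } is nonempty. -/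

import Mathlib

open scoped RealInnerProductSpace

/-- Theorem 1, Property 1 of the paper, in abstract form: feasibility of the
QCQP safety constraints. The condition `λ_min(g gᵀ) ≥ ḡ²` and normalized gradients
are abstracted into unit vectors `a j` and the constants `gbar`, `δbar`. -/
theorem stmt0 (n_u n_c : ℕ) (hnu : 1 ≤ n_u) (hnc : 1 ≤ n_c)
    (gbar δbar : ℝ) (hδ0 : 0 ≤ δbar) (hδg : δbar < gbar)
    (α : ℝ → ℝ) (hαcont : Continuous α) (hαmono : StrictMono α) (hα0 : α 0 = 0)
    (hαcond : ∀ s ≤ (0 : ℝ),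
      α s + (gbar + δbar) / (gbar - δbar) * α (-s) ≤ 0)
    (ᾱ : Fin n_c → ℝ → ℝ)
    (hᾱcont : ∀ j, Continuous (ᾱ j))
    (hᾱmono : ∀ j, StrictMono (ᾱ j))
    (hᾱbij : ∀ j, Function.Bijective (ᾱ j))
    (hᾱ0 : ∀ j, ᾱ j 0 = 0)
    (a : Fin n_c → EuclideanSpace ℝ (Fin n_u)) (ha : ∀ j, ‖a j‖ = 1)
    (r d : Fin n_c → ℝ) (hrd : ∀ j, r j ≤ ᾱ j (d j))
    (hdisj : ∀ j k, j ≠ k → d j + d k ≤ 0) :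
    ∃ u : EuclideanSpace ℝ (Fin n_u),
      ∀ j, ⟪a j, u⟫ + δbar / gbar * ‖u‖ ≤ -α (Function.invFun (ᾱ j) (r j)) := by
  have hg : 0 < gbar := lt_of_le_of_lt hδ0 hδg
  have hgd : 0 < gbar - δbar := sub_pos.mpr hδg
  set s : Fin n_c → ℝ := fun j => Function.invFun (ᾱ j) (r j) with hs
  have hinv : ∀ j, ᾱ j (s j) = r j := fun j =>
    Function.rightInverse_invFun (hᾱbij j).surjective (r j)
  have hsd : ∀ j, s j ≤ d j := by
    intro j
    have h := hrd j
    rw [← hinv j] at h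
    exact (hᾱmono j).le_iff_le.mp h
  haveI : Nonempty (Fin n_c) := ⟨⟨0, hnc⟩⟩
  obtain ⟨j0, hj0⟩ := Finite.exists_max s
  by_cases hpos : s j0 ≤ 0
  · refine ⟨0, fun j => ?_⟩
    simp only [inner_zero_right, norm_zero, mul_zero, add_zero]
    have h1 : α (s j) ≤ α 0 := hαmono.le_iff_le.mpr ((hj0 j).trans hpos)
    rw [hα0] at h1
    linarith
  · push_neg at hpos
    set c := α (s j0) * (gbar / (gbar - δbar)) with hc
    have hα0pos : 0 < α (s j0) := by rw [← hα0]; exact hαmono hpos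
    have hcpos : 0 < c := mul_pos hα0pos (div_pos hg hgd)
    refine ⟨-(c • a j0), fun j => ?_⟩
    have hnorm : ‖-(c • a j0)‖ = c := by
      rw [norm_neg, norm_smul, ha j0, Real.norm_eq_abs, abs_of_pos hcpos, mul_one]
    have hip : ⟪a j, -(c • a j0)⟫ = -(c * ⟪a j, a j0⟫) := by
      rw [inner_neg_right, real_inner_smul_right]
    rw [hnorm, hip]
    by_cases hjj : j = j0
    · subst hjj
      have hself : ⟪a j, a j⟫ = 1 := by
        rw [real_inner_self_eq_norm_sq, ha j]; norm_num
      rw [hself, mul_one]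
      have : -c + δbar / gbar * c = -α (s j) := by
        rw [hc]; field_simp; ring
      linarith
    · have hCS : -1 ≤ ⟪a j, a j0⟫ := by
        have h := abs_real_inner_le_norm (a j) (a j0)
        rw [ha j, ha j0, mul_one] at h
        linarith [neg_abs_le (⟪a j, a j0⟫)]
      have h1 : -(c * ⟪a j, a j0⟫) ≤ c := by nlinarith
      have hsj : s j ≤ -(s j0) := by
        have h2 := hdisj j j0 hjj
        linarith [hsd j, hsd j0]
      have hsjneg : s j ≤ 0 := le_trans hsj (by linarith)
      have hcond := hαcond (s j) hsjneg
      have hmono : α (s j0) ≤ α (-(s j)) := hαmono.le_iff_le.mpr (by linarith)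
      have hlnn : 0 ≤ (gbar + δbar) / (gbar - δbar) :=
        div_nonneg (by linarith) hgd.le
      have key : c + δbar / gbar * c = (gbar + δbar) / (gbar - δbar) * α (s j0) := by
        rw [hc]; field_simp
      nlinarith [mul_le_mul_of_nonneg_left hmono hlnn]
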